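/- Let q > 2, let G : ℝ → ℝ be continuous, homogeneous of degree q, with |G(s)| ≤ C₀|s|^q, suppose F(u₀) > 0 for some u₀ ∈ H²(ℝ), and let E : H²(ℝ) → ℝ satisfy C₁‖u‖²_{H²} ≤ E(u) ≤ C₂‖u‖²_{H²} for all u ∈ H²(ℝ) with constants C₁, C₂ > 0, and be homogeneous of degree 2. Then for every λ > 0 and every θ ∈ (0, λ), the values I_μ = inf{E(u) : u ∈ H²(ℝ), F(u) = μ} satisfy the strict subadditivity inequality I_λ < I_θ + I_{λ−θ}. -/

import Mathlib

open MeasureTheory Filter Set Pointwise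

/-- Membership in the Sobolev space `H²(ℝ)`: `u`, `u'`, `u''` are square integrable. -/
def InH2 (u : ℝ → ℝ) : Prop :=
  Differentiable ℝ u ∧ Differentiable ℝ (deriv u) ∧
  MemLp u 2 volume ∧ MemLp (deriv u) 2 volume ∧ MemLp (deriv (deriv u)) 2 volume

/-- The squared `H²(ℝ)` norm: `‖u‖²_{H²} = ∫ (u² + (u')² + (u'')²)`. -/
noncomputable def H2normSq (u : ℝ → ℝ) : ℝ :=
  ∫ x : ℝ, ((u x) ^ 2 + (deriv u x) ^ 2 + (deriv (deriv u) x) ^ 2)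

/-- The constraint functional `F(u) = ∫ G(u)`. -/
noncomputable def Ffun (G : ℝ → ℝ) (u : ℝ → ℝ) : ℝ := ∫ x : ℝ, G (u x)

/-- The constrained infimum `I_μ = inf {E(u) : u ∈ H²(ℝ), F(u) = μ}`. -/
noncomputable def Iinf (E : (ℝ → ℝ) → ℝ) (G : ℝ → ℝ) (mu : ℝ) : ℝ :=
  sInf (E '' {u : ℝ → ℝ | InH2 u ∧ Ffun G u = mu})

/-- An integrable nonnegative function tending to `L` at `-∞` has `L = 0`. -/
lemma limit_atBot_zero {g : ℝ → ℝ} (hg : Integrable g) (h0 : ∀ x, 0 ≤ g x) {L : ℝ}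
    (hL : Filter.Tendsto g atBot (nhds L)) : L = 0 := by
  -- L ≥ 0 as limit of nonnegatives
  have hL0 : 0 ≤ L := le_of_tendsto_of_tendsto tendsto_const_nhds hL
    (Filter.Eventually.of_forall h0)
  by_contra hne
  have hLpos : 0 < L := lt_of_le_of_ne hL0 (Ne.symm hne)
  have hev : ∀ᶠ x in atBot, L / 2 ≤ g x := by
    have := hL (Ioi_mem_nhds (show L / 2 < L by linarith))
    filter_upwards [this] with x hx using le_of_lt hx
  obtain ⟨a, ha⟩ := Filter.eventually_atBot.mp hev
  -- const L/2 would be integrable on Iic a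
  have hint : IntegrableOn (fun _ : ℝ => L / 2) (Set.Iic a) volume := by
    apply Integrable.mono' (hg.restrict (s := Set.Iic a))
      aestronglyMeasurable_const
    refine (ae_restrict_iff' measurableSet_Iic).2 (Filter.Eventually.of_forall ?_)
    intro x hx
    have := ha x hx
    rw [Real.norm_eq_abs, abs_of_pos (by linarith)]
    exact this
  have : (L / 2 : ℝ) = 0 ∨ volume (Set.univ : Set ℝ) < ⊤ := by
    have h2 := (integrable_const_iff (c := L / 2)).mp hint
    rcases h2 with h | h
    · exact Or.inl h
    · exfalso
      have h := h.measure_univ_lt_top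
      rw [Measure.restrict_apply_univ, Real.volume_Iic] at h
      exact (lt_irrefl _ h)
  rcases this with h | h
  · linarith
  · exact absurd h (by simp [Real.volume_univ])

/-- Agmon-type bound: `u(x)² ≤ ∫ (u² + u'²)` for `u` with `u, u' ∈ L²`. -/
lemma agmon {u : ℝ → ℝ} (hu : Differentiable ℝ u) (hu' : Differentiable ℝ (deriv u))
    (h2 : MemLp u 2 volume) (h2' : MemLp (deriv u) 2 volume) (x : ℝ) :
    u x ^ 2 ≤ ∫ y : ℝ, (u y ^ 2 + deriv u y ^ 2) := by
  have hcu : Continuous u := hu.continuous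
  have hcu' : Continuous (deriv u) := hu'.continuous
  have hsq : Integrable (fun y => u y ^ 2) volume := h2.integrable_sq
  have hsq' : Integrable (fun y => deriv u y ^ 2) volume := h2'.integrable_sq
  have hsum : Integrable (fun y => u y ^ 2 + deriv u y ^ 2) volume := hsq.add hsq'
  set g : ℝ → ℝ := fun y => u y ^ 2 with hg_def
  set g' : ℝ → ℝ := fun y => 2 * u y * deriv u y with hg'_def
  have hderiv : ∀ y, HasDerivAt g (g' y) y := by
    intro y
    have := ((hu y).hasDerivAt).fun_pow 2
    simpa [g, g', mul_comm, mul_assoc] using this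
  have hg'int : Integrable g' volume := by
    apply Integrable.mono' hsum ((continuous_const.mul hcu).mul hcu').aestronglyMeasurable
    refine Filter.Eventually.of_forall fun y => ?_
    rw [Real.norm_eq_abs]
    have h1 : |2 * u y * deriv u y| = 2 * |u y| * |deriv u y| := by
      rw [abs_mul, abs_mul]; simp [abs_of_nonneg]
    show |2 * u y * deriv u y| ≤ _
    rw [h1]
    nlinarith [sq_nonneg (|u y| - |deriv u y|), sq_abs (u y), sq_abs (deriv u y)]
  -- FTC on intervals
  have hFTC : ∀ y : ℝ, g x - g y = ∫ t in y..x, g' t := by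
    intro y
    rw [intervalIntegral.integral_eq_sub_of_hasDerivAt (fun t _ => hderiv t)
      (hg'int.intervalIntegrable)]
  -- limit of g at -∞
  have htend : Filter.Tendsto g atBot (nhds (g x - ∫ t in Set.Iic x, g' t)) := by
    have h1 : Filter.Tendsto (fun y : ℝ => ∫ t in y..x, g' t) atBot
        (nhds (∫ t in Set.Iic x, g' t)) :=
      MeasureTheory.intervalIntegral_tendsto_integral_Iic x hg'int.integrableOn
        Filter.tendsto_id
    have h2 : Filter.Tendsto (fun y : ℝ => g x - ∫ t in y..x, g' t) atBot
        (nhds (g x - ∫ t in Set.Iic x, g' t)) := tendsto_const_nhds.sub h1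
    refine h2.congr fun y => ?_
    rw [← hFTC y]; ring
  have hL0 : g x - ∫ t in Set.Iic x, g' t = 0 :=
    limit_atBot_zero (by simpa [g] using hsq) (fun y => sq_nonneg _) htend
  have hgx : g x = ∫ t in Set.Iic x, g' t := by linarith
  calc u x ^ 2 = ∫ t in Set.Iic x, g' t := hgx
    _ ≤ ∫ t in Set.Iic x, (u t ^ 2 + deriv u t ^ 2) := by
        apply setIntegral_mono_on (hg'int.integrableOn) (hsum.integrableOn)
          measurableSet_Iic
        intro t _
        have : g' t ≤ |g' t| := le_abs_self _
        refine this.trans ?_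
        have h1 : |2 * u t * deriv u t| = 2 * |u t| * |deriv u t| := by
          rw [abs_mul, abs_mul]; simp [abs_of_nonneg]
        rw [show g' t = 2 * u t * deriv u t from rfl, h1]
        nlinarith [sq_nonneg (|u t| - |deriv u t|), sq_abs (u t), sq_abs (deriv u t)]
    _ ≤ ∫ t : ℝ, (u t ^ 2 + deriv u t ^ 2) :=
        setIntegral_le_integral hsum
          (Filter.Eventually.of_forall fun t => by positivity)

/-- strict subadditivity `I_λ < I_θ + I_{λ−θ}` for `0 < θ < λ`. -/
theorem rosenau_Iinf_strict_subadd (q : ℝ) (hq : 2 < q)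
    (G : ℝ → ℝ) (hGc : Continuous G)
    (hhom : ∀ t : ℝ, 0 < t → ∀ s : ℝ, G (t * s) = t ^ q * G s)
    (C₀ : ℝ) (hC₀ : 0 < C₀) (hG : ∀ s : ℝ, |G s| ≤ C₀ * |s| ^ q)
    (hF : ∃ u₀ : ℝ → ℝ, InH2 u₀ ∧ 0 < Ffun G u₀)
    (E : (ℝ → ℝ) → ℝ) (C₁ C₂ : ℝ) (hC₁ : 0 < C₁) (hC₂ : 0 < C₂)
    (hE : ∀ u : ℝ → ℝ, InH2 u → C₁ * H2normSq u ≤ E u ∧ E u ≤ C₂ * H2normSq u)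
    (hEquad : ∀ t : ℝ, 0 < t → ∀ u : ℝ → ℝ, E (fun x => t * u x) = t ^ 2 * E u) :
    ∀ lam : ℝ, 0 < lam → ∀ θ : ℝ, 0 < θ → θ < lam →
      Iinf E G lam < Iinf E G θ + Iinf E G (lam - θ) := by
  have hq0 : (0:ℝ) < q := by linarith
  -- scaling of InH2
  have hInH2_smul : ∀ (t : ℝ) (u : ℝ → ℝ), InH2 u → InH2 (fun x => t * u x) := by
    intro t u hu
    obtain ⟨hd1, hd2, hm0, hm1, hm2⟩ := hu
    have hD1 : deriv (fun x => t * u x) = fun x => t * deriv u x := by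
      funext x; exact deriv_const_mul t (hd1 x)
    have hD2 : deriv (deriv (fun x => t * u x)) = fun x => t * deriv (deriv u) x := by
      rw [hD1]; funext x; exact deriv_const_mul t (hd2 x)
    refine ⟨fun x => (hd1 x).const_mul t, ?_, hm0.const_mul t, ?_, ?_⟩
    · rw [hD1]; exact fun x => (hd2 x).const_mul t
    · rw [hD1]; exact hm1.const_mul t
    · rw [hD2]; exact hm2.const_mul t
  -- scaling of F
  have hF_smul : ∀ (t : ℝ), 0 < t → ∀ u : ℝ → ℝ,
      Ffun G (fun x => t * u x) = t ^ q * Ffun G u := by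
    intro t ht u
    unfold Ffun
    simp_rw [hhom t ht]
    exact integral_const_mul _ _
  -- the constraint set
  set S : ℝ → Set (ℝ → ℝ) := fun μ => {u | InH2 u ∧ Ffun G u = μ} with hS
  -- scaling of the constraint set
  have hS_smul : ∀ (t : ℝ), 0 < t → ∀ μ : ℝ,
      S (t ^ q * μ) = (fun (u : ℝ → ℝ) => fun x => t * u x) '' S μ := by
    intro t ht μ
    ext u
    constructor
    · rintro ⟨hu, hFu⟩
      refine ⟨fun x => t⁻¹ * u x, ⟨hInH2_smul _ _ hu, ?_⟩, ?_⟩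
      · rw [hF_smul _ (inv_pos.2 ht), hFu, Real.inv_rpow ht.le, ← mul_assoc,
          inv_mul_cancel₀ (by positivity), one_mul]
      · funext x; field_simp
    · rintro ⟨v, ⟨hv, hFv⟩, rfl⟩
      exact ⟨hInH2_smul _ _ hv, by rw [hF_smul _ ht, hFv]⟩
  -- scaling of Iinf
  have hI_scale : ∀ (t : ℝ), 0 < t → ∀ μ : ℝ,
      Iinf E G (t ^ q * μ) = t ^ 2 * Iinf E G μ := by
    intro t ht μ
    unfold Iinf
    rw [show {u : ℝ → ℝ | InH2 u ∧ Ffun G u = t ^ q * μ} = S (t ^ q * μ) from rfl,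
      hS_smul t ht μ, Set.image_image]
    have himg : (fun v : ℝ → ℝ => E fun x => t * v x) '' S μ
        = (fun v : ℝ → ℝ => t ^ 2 * E v) '' S μ :=
      Set.image_congr' (fun v => hEquad t ht v)
    rw [himg, show (fun v : ℝ → ℝ => t ^ 2 * E v) '' S μ
        = (fun y => t ^ 2 * y) '' (E '' S μ) from (Set.image_image _ _ _).symm]
    have h2 : (fun y : ℝ => t ^ 2 * y) '' (E '' S μ) = (t ^ 2 : ℝ) • (E '' S μ) := by
      simp only [← Set.image_smul, smul_eq_mul]
    rw [h2, Real.sInf_smul_of_nonneg (by positivity), smul_eq_mul]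
  -- nonemptiness of S μ for μ > 0
  obtain ⟨u₀, hu₀, hFu₀⟩ := hF
  have hS_ne : ∀ μ : ℝ, 0 < μ → (S μ).Nonempty := by
    intro μ hμ
    set c := Ffun G u₀ with hc
    set t := (μ / c) ^ (1/q) with htdef
    have ht : 0 < t := Real.rpow_pos_of_pos (by positivity) _
    refine ⟨fun x => t * u₀ x, hInH2_smul _ _ hu₀, ?_⟩
    rw [hF_smul _ ht]
    have htq : t ^ q = μ / c := by
      rw [htdef, ← Real.rpow_mul (by positivity : (0:ℝ) ≤ μ / c),
        one_div, inv_mul_cancel₀ (ne_of_gt hq0), Real.rpow_one]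
    rw [htq]
    field_simp; exact hc.symm
  -- lower bound: E u ≥ C₁ (μ/C₀)^(2/q) on S μ
  have hlb : ∀ μ : ℝ, 0 < μ → ∀ u ∈ S μ, C₁ * (μ / C₀) ^ (2/q) ≤ E u := by
    intro μ hμ u hu
    obtain ⟨⟨hd1, hd2, hm0, hm1, hm2⟩, hFu⟩ := hu
    have hsq0 : Integrable (fun y => u y ^ 2) volume := hm0.integrable_sq
    have hsq1 : Integrable (fun y => deriv u y ^ 2) volume := hm1.integrable_sq
    have hsq2 : Integrable (fun y => deriv (deriv u) y ^ 2) volume := hm2.integrable_sq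
    have hH2nonneg : 0 ≤ H2normSq u := by
      unfold H2normSq
      positivity
    set N := Real.sqrt (H2normSq u) with hN
    have hNsq : N ^ 2 = H2normSq u := Real.sq_sqrt hH2nonneg
    have hN0 : 0 ≤ N := Real.sqrt_nonneg _
    -- ∫(u²+u'²) ≤ H2normSq u
    have hmono1 : (∫ y : ℝ, (u y ^ 2 + deriv u y ^ 2)) ≤ H2normSq u := by
      unfold H2normSq
      apply integral_mono (hsq0.add hsq1) ((hsq0.add hsq1).add hsq2)
      intro y
      simp only [Pi.add_apply]
      nlinarith [sq_nonneg (deriv (deriv u) y)]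
    -- pointwise bound |u x| ≤ N
    have hbd : ∀ x, |u x| ≤ N := by
      intro x
      have h1 : u x ^ 2 ≤ N ^ 2 := (agmon hd1 hd2 hm0 hm1 x).trans (hNsq ▸ hmono1)
      calc |u x| = Real.sqrt (u x ^ 2) := (Real.sqrt_sq_eq_abs _).symm
          _ ≤ Real.sqrt (N ^ 2) := Real.sqrt_le_sqrt h1
          _ = N := by rw [Real.sqrt_sq hN0]
    -- G ∘ u is integrable (otherwise F u = 0 ≠ μ)
    have hGint : Integrable (fun x => G (u x)) volume := by
      by_contra hni
      simp only [Ffun] at hFu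
      rw [integral_undef hni] at hFu
      exact absurd hFu.symm (ne_of_gt hμ)
    -- pointwise |G(u x)| ≤ C₀ N^(q-2) u x ^ 2
    have hptw : ∀ x, |G (u x)| ≤ C₀ * N ^ (q - 2) * u x ^ 2 := by
      intro x
      refine (hG (u x)).trans ?_
      rcases eq_or_lt_of_le (abs_nonneg (u x)) with h0 | hpos
      · rw [← h0, Real.zero_rpow (ne_of_gt hq0)]
        have : u x = 0 := abs_eq_zero.mp h0.symm
        rw [this]
        simp
      · have h1 : |u x| ^ q = |u x| ^ (q - 2) * |u x| ^ (2:ℝ) := by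
          rw [← Real.rpow_add hpos]; ring_nf
        have h2 : |u x| ^ (2:ℝ) = u x ^ 2 := by
          rw [show (2:ℝ) = ((2:ℕ):ℝ) by norm_num, Real.rpow_natCast, sq_abs]
        have h3 : |u x| ^ (q - 2) ≤ N ^ (q - 2) :=
          Real.rpow_le_rpow (abs_nonneg _) (hbd x) (by linarith)
        calc C₀ * |u x| ^ q = C₀ * (|u x| ^ (q-2) * u x ^ 2) := by rw [h1, h2]
          _ ≤ C₀ * (N ^ (q-2) * u x ^ 2) := by
              apply mul_le_mul_of_nonneg_left _ hC₀.le
              exact mul_le_mul_of_nonneg_right h3 (sq_nonneg _)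
          _ = C₀ * N ^ (q-2) * u x ^ 2 := by ring
    -- μ ≤ C₀ N^(q-2) ∫ u² ≤ C₀ N^q
    have hμle : μ ≤ C₀ * N ^ (q - 2) * N ^ 2 := by
      have h1 : μ = ∫ x : ℝ, G (u x) := hFu.symm
      have h2 : (∫ x : ℝ, G (u x)) ≤ ∫ x : ℝ, C₀ * N ^ (q-2) * u x ^ 2 := by
        apply integral_mono hGint (hsq0.const_mul _)
        intro x
        exact (le_abs_self _).trans (hptw x)
      have h3 : (∫ x : ℝ, C₀ * N ^ (q-2) * u x ^ 2)
          = C₀ * N ^ (q-2) * ∫ x : ℝ, u x ^ 2 := integral_const_mul _ _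
      have h4 : (∫ x : ℝ, u x ^ 2) ≤ N ^ 2 := by
        rw [hNsq]
        unfold H2normSq
        apply integral_mono hsq0 ((hsq0.add hsq1).add hsq2)
        intro y
        simp only [Pi.add_apply]
        nlinarith [sq_nonneg (deriv u y), sq_nonneg (deriv (deriv u) y)]
      have h5 : 0 ≤ C₀ * N ^ (q-2) := by positivity
      calc μ = ∫ x : ℝ, G (u x) := h1
        _ ≤ C₀ * N ^ (q-2) * ∫ x : ℝ, u x ^ 2 := by rw [← h3]; exact h2
        _ ≤ C₀ * N ^ (q-2) * N ^ 2 := mul_le_mul_of_nonneg_left h4 h5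
    -- conclude N² ≥ (μ/C₀)^(2/q)
    have hNpos : 0 < N := by
      by_contra hn
      push_neg at hn
      have : N = 0 := le_antisymm hn hN0
      rw [this] at hμle
      rw [Real.zero_rpow (by intro h; linarith : q - 2 ≠ 0)] at hμle
      simp at hμle
      linarith
    have hNq : μ / C₀ ≤ N ^ q := by
      have : N ^ (q-2) * N ^ 2 = N ^ q := by
        rw [show N ^ 2 = N ^ (2:ℝ) by
          rw [show (2:ℝ) = ((2:ℕ):ℝ) by norm_num, Real.rpow_natCast],
          ← Real.rpow_add hNpos]
        ring_nf
      rw [div_le_iff₀ hC₀]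
      calc μ ≤ C₀ * N ^ (q-2) * N ^ 2 := hμle
        _ = N ^ q * C₀ := by rw [mul_assoc, this]; ring
    have hfinal : (μ / C₀) ^ (2/q) ≤ N ^ 2 := by
      have h1 : (μ / C₀) ^ (2/q) ≤ (N ^ q) ^ (2/q) :=
        Real.rpow_le_rpow (by positivity) hNq (div_nonneg (by norm_num) hq0.le)
      have h2 : (N ^ q) ^ (2/q) = N ^ 2 := by
        rw [← Real.rpow_natCast N 2, ← Real.rpow_mul hN0]
        congr 1
        field_simp; norm_num
      linarith [h2 ▸ h1]
    have hE1 := (hE u ⟨hd1, hd2, hm0, hm1, hm2⟩).1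
    calc C₁ * (μ / C₀) ^ (2/q) ≤ C₁ * N ^ 2 :=
          mul_le_mul_of_nonneg_left hfinal hC₁.le
      _ = C₁ * H2normSq u := by rw [hNsq]
      _ ≤ E u := hE1
  -- Iinf is positive for μ > 0
  have hIpos : ∀ μ : ℝ, 0 < μ → C₁ * (μ / C₀) ^ (2/q) ≤ Iinf E G μ := by
    intro μ hμ
    unfold Iinf
    apply le_csInf ((hS_ne μ hμ).image E)
    rintro y ⟨u, hu, rfl⟩
    exact hlb μ hμ u hu
  -- main proof
  intro lam hlam θ hθ hθlam
  set τ := θ / lam with hτdef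
  have hτ0 : 0 < τ := by positivity
  have hτ1 : τ < 1 := by rw [hτdef, div_lt_one hlam]; exact hθlam
  have hIlampos : 0 < Iinf E G lam :=
    lt_of_lt_of_le (by positivity) (hIpos lam hlam)
  -- I_θ = τ^(2/q) I_lam
  have hscale : ∀ σ : ℝ, 0 < σ → σ < 1 →
      Iinf E G (σ * lam) = σ ^ (2/q) * Iinf E G lam := by
    intro σ hσ0 hσ1
    set t := σ ^ (1/q) with htdef
    have ht : 0 < t := Real.rpow_pos_of_pos hσ0 _
    have htq : t ^ q = σ := by
      rw [htdef, ← Real.rpow_mul hσ0.le, one_div, inv_mul_cancel₀ (ne_of_gt hq0),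
        Real.rpow_one]
    have ht2 : t ^ 2 = σ ^ (2/q) := by
      rw [htdef, ← Real.rpow_natCast (σ ^ (1/q)) 2, ← Real.rpow_mul hσ0.le]
      congr 1
      push_cast
      ring
    calc Iinf E G (σ * lam) = Iinf E G (t ^ q * lam) := by rw [htq]
      _ = t ^ 2 * Iinf E G lam := hI_scale t ht lam
      _ = σ ^ (2/q) * Iinf E G lam := by rw [ht2]
  have hIθ : Iinf E G θ = τ ^ (2/q) * Iinf E G lam := by
    have : τ * lam = θ := by rw [hτdef]; field_simp
    rw [← this, hscale τ hτ0 hτ1]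
  have hIlamt : Iinf E G (lam - θ) = (1 - τ) ^ (2/q) * Iinf E G lam := by
    have h1 : (1 - τ) * lam = lam - θ := by rw [hτdef]; field_simp
    rw [← h1, hscale (1 - τ) (by linarith) (by linarith)]
  rw [hIθ, hIlamt, ← add_mul]
  have hkey : 1 < τ ^ (2/q) + (1 - τ) ^ (2/q) := by
    have h1 : τ < τ ^ (2/q) := by
      have := Real.rpow_lt_rpow_of_exponent_gt hτ0 hτ1
        (show 2/q < 1 by rw [div_lt_one hq0]; linarith)
      rwa [Real.rpow_one] at this
    have h2 : 1 - τ < (1 - τ) ^ (2/q) := by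
      have := Real.rpow_lt_rpow_of_exponent_gt (by linarith : (0:ℝ) < 1 - τ)
        (by linarith) (show 2/q < 1 by rw [div_lt_one hq0]; linarith)
      rwa [Real.rpow_one] at this
    linarith
  calc Iinf E G lam = 1 * Iinf E G lam := (one_mul _).symm
    _ < (τ ^ (2/q) + (1 - τ) ^ (2/q)) * Iinf E G lam :=
        mul_lt_mul_of_pos_right hkey hIlampos
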